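/- For z in the upper half plane (or any complex z with z ∉ {0,1}), the Bloch–Wigner function D(z) = Im(Li₂(z)) + arg(1−z)·log|z| satisfies D(z) = D(1 − 1/z). -/

import Mathlib

open Complex MeasureTheory Set intervalIntegral

/-- The dilogarithm `Li₂(z)`, defined for `z ∈ ℂ \ [1,∞)` by the integral
`Li₂(z) = -∫₀¹ log(1 - z t)/t dt` (the analytic continuation of `∑ zⁿ/n²`). -/
noncomputable def Li2 (z : ℂ) : ℂ :=
  -∫ t in (0:ℝ)..1, Complex.log (1 - z * t) / t

/-- The Bloch–Wigner function `D(z) = Im(Li₂(z)) + arg(1−z)·log|z|`. -/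
noncomputable def BlochWigner (z : ℂ) : ℝ :=
  (Li2 z).im + (1 - z).arg * Real.log ‖z‖

lemma one_sub_mul_mem_slitPlane {z : ℂ} (hz : z.im ≠ 0) {t : ℝ} (ht : 0 ≤ t) :
    1 - z * t ∈ Complex.slitPlane := by
  rcases eq_or_lt_of_le ht with h | h
  · refine Complex.mem_slitPlane_iff.2 (Or.inl ?_)
    simp [← h]
  · refine Complex.mem_slitPlane_iff.2 (Or.inr ?_)
    have : (1 - z * t).im = -(z.im * t) := by simp
    rw [this]
    exact fun hc => hz (by nlinarith [neg_eq_zero.mp hc])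

lemma hasDerivAt_one_sub_mul (z : ℂ) (t : ℝ) :
    HasDerivAt (fun s : ℝ => 1 - z * s) (-z) t := by
  simpa using ((Complex.ofRealCLM.hasDerivAt (x := t)).const_mul z).const_sub 1

lemma integral_inv_one_sub_mul {z : ℂ} (hz : z.im ≠ 0) :
    ∫ t in (0:ℝ)..1, (1 - z * t)⁻¹ = -Complex.log (1 - z) / z := by
  have hz0 : z ≠ 0 := fun h => hz (by simp [h])
  have hmem : ∀ t : ℝ, t ∈ Set.uIcc (0:ℝ) 1 → 1 - z * t ∈ Complex.slitPlane := by
    intro t ht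
    rw [Set.uIcc_of_le (zero_le_one)] at ht
    exact one_sub_mul_mem_slitPlane hz ht.1
  have h1 : ∀ t ∈ Set.uIcc (0:ℝ) 1,
      HasDerivAt (fun s : ℝ => -Complex.log (1 - z * s) / z) ((1 - z * t)⁻¹) t := by
    intro t ht
    have h2 := (((Complex.hasDerivAt_log (hmem t ht)).comp t
      (hasDerivAt_one_sub_mul z t)).neg.div_const z)
    refine h2.congr_deriv ?_
    have hne : 1 - z * t ≠ 0 := Complex.slitPlane_ne_zero (hmem t ht)
    rw [mul_neg, neg_neg, mul_div_assoc, div_self hz0, mul_one]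
  have hcont : ContinuousOn (fun t : ℝ => (1 - z * t)⁻¹) (Set.uIcc (0:ℝ) 1) := by
    apply ContinuousOn.inv₀
    · fun_prop
    · exact fun t ht => Complex.slitPlane_ne_zero (hmem t ht)
  have := intervalIntegral.integral_eq_sub_of_hasDerivAt h1 hcont.intervalIntegrable
  simpa using this

lemma integrableOn_log_Ioc01 : IntegrableOn Real.log (Set.Ioc (0:ℝ) 1) := by
  have h := intervalIntegral.integrableOn_deriv_of_nonneg
      (g := fun t : ℝ => t - t * Real.log t) (g' := fun t : ℝ => -Real.log t)
      (a := 0) (b := 1)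
      (continuous_id.sub Real.continuous_mul_log).continuousOn
      (fun x hx => by
        have hx0 : x ≠ 0 := ne_of_gt hx.1
        have := (hasDerivAt_id x).sub ((hasDerivAt_id x).mul (Real.hasDerivAt_log hx0))
        refine this.congr_deriv ?_
        simp only [id, one_mul, mul_inv_cancel₀ hx0]; ring)
      (fun x hx => by
        have := Real.log_nonpos (le_of_lt hx.1) (le_of_lt hx.2)
        simp only [neg_nonneg]
        exact this)
  have h2 := h.neg
  have : (-fun t : ℝ => -Real.log t) = Real.log := by funext t; simp
  rwa [this] at h2

lemma intervalIntegrable_log'' (a b : ℝ) : IntervalIntegrable Real.log volume a b := by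
  have key : ∀ c : ℝ, 0 ≤ c → IntervalIntegrable Real.log volume 0 c := by
    intro c hc
    rcases le_or_gt c 1 with h | h
    · have h1 : IntervalIntegrable Real.log volume 0 1 := by
        rw [intervalIntegrable_iff, Set.uIoc_of_le zero_le_one]
        exact integrableOn_log_Ioc01
      exact h1.mono_set (by rw [Set.uIcc_of_le hc, Set.uIcc_of_le zero_le_one]
                            exact Set.Icc_subset_Icc le_rfl h)
    · have h1 : IntervalIntegrable Real.log volume 0 1 := by
        rw [intervalIntegrable_iff, Set.uIoc_of_le zero_le_one]
        exact integrableOn_log_Ioc01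
      refine h1.trans (intervalIntegrable_log ?_)
      rw [Set.uIcc_of_le (by linarith : (1:ℝ) ≤ c)]
      intro hc'
      exact absurd hc'.1 (by norm_num)
  have neg : ∀ c : ℝ, c ≤ 0 → IntervalIntegrable Real.log volume 0 c := by
    intro c hc
    have h1 := (key (-c) (by linarith))
    have h2 := (IntervalIntegrable.iff_comp_neg (f := Real.log) (a := 0) (b := -c)).mp h1
    simp only [neg_zero, neg_neg] at h2
    have : (fun x : ℝ => Real.log (-x)) = Real.log := by
      funext x; exact Real.log_neg_eq_log x
    rwa [this] at h2
  have all : ∀ c : ℝ, IntervalIntegrable Real.log volume 0 c := fun c => by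
    rcases le_or_gt 0 c with h | h
    · exact key c h
    · exact neg c h.le
  exact ((all a).symm).trans (all b)

lemma intervalIntegrable_log_one_sub_mul (x : ℝ) (hx : x ≠ 0) (a b : ℝ) :
    IntervalIntegrable (fun t : ℝ => Real.log (1 - x * t)) volume a b := by
  have h1 := (intervalIntegrable_log'' (1 - x * a) (1 - x * b)).comp_sub_left 1
  have h2 := h1.comp_mul_left (c := x)
  simp only [sub_sub_cancel] at h2
  rw [mul_comm x a, mul_comm x b, mul_div_assoc, mul_div_assoc, div_self hx,
    mul_one, mul_one] at h2
  exact h2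
lemma li2_integrand_measurable (z : ℂ) :
    AEStronglyMeasurable (fun t : ℝ => Complex.log (1 - z * t) / t)
      (volume.restrict (Set.uIoc (0:ℝ) 1)) := by
  apply Measurable.aestronglyMeasurable
  exact (Complex.measurable_log.comp
    (measurable_const.sub (Complex.measurable_ofReal.const_mul z))).div
    Complex.measurable_ofReal

lemma li2_integrand_continuousOn {z : ℂ} (hz : z.im ≠ 0) {s : Set ℝ}
    (hs : ∀ t ∈ s, 0 < t) :
    ContinuousOn (fun t : ℝ => Complex.log (1 - z * t) / t) s := by
  apply ContinuousOn.div
  · intro t ht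
    apply ContinuousAt.continuousWithinAt
    have hc : ContinuousAt (fun s : ℝ => 1 - z * (s:ℂ)) t := by fun_prop
    exact hc.clog (one_sub_mul_mem_slitPlane hz (hs t ht).le)
  · fun_prop
  · intro t ht
    exact_mod_cast Complex.ofReal_ne_zero.mpr (ne_of_gt (hs t ht))

lemma norm_log_one_sub_le_self {w : ℂ} (hw : ‖w‖ ≤ 1/2) :
    ‖Complex.log (1 - w)‖ ≤ (3/2) * ‖w‖ := by
  have := Complex.norm_log_one_add_half_le_self (z := -w) (by simpa using hw)
  simpa [sub_eq_add_neg] using this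

lemma li2_integrand_intervalIntegrable {z : ℂ} (hz : z.im ≠ 0) :
    IntervalIntegrable (fun t : ℝ => Complex.log (1 - z * t) / t) volume 0 1 := by
  set t₀ : ℝ := min 1 (1 / (2 * (‖z‖ + 1))) with ht₀def
  have hz1 : (0:ℝ) < ‖z‖ + 1 := by positivity
  have ht₀pos : 0 < t₀ := lt_min one_pos (by positivity)
  have ht₀le1 : t₀ ≤ 1 := min_le_left _ _
  have hA : IntervalIntegrable (fun t : ℝ => Complex.log (1 - z * t) / t) volume 0 t₀ := by
    rw [intervalIntegrable_iff, Set.uIoc_of_le ht₀pos.le]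
    apply Measure.integrableOn_of_bounded (M := 3/2 * ‖z‖)
      measure_Ioc_lt_top.ne
    · apply Measurable.aestronglyMeasurable
      exact (Complex.measurable_log.comp
        (measurable_const.sub (Complex.measurable_ofReal.const_mul z))).div
        Complex.measurable_ofReal
    · apply (ae_restrict_iff' measurableSet_Ioc).mpr
      apply Filter.Eventually.of_forall
      intro t ht
      have htpos : 0 < t := ht.1
      have htle : t ≤ 1 / (2 * (‖z‖ + 1)) := le_trans ht.2 (min_le_right _ _)
      have hwnorm : ‖z * (t:ℂ)‖ ≤ 1/2 := by
        rw [norm_mul, Complex.norm_real, Real.norm_of_nonneg htpos.le]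
        calc ‖z‖ * t ≤ (‖z‖ + 1) * (1 / (2 * (‖z‖ + 1))) := by
              apply mul_le_mul (by linarith) htle htpos.le (by positivity)
          _ = 1/2 := by field_simp
      have hlog := norm_log_one_sub_le_self hwnorm
      rw [norm_div, Complex.norm_real, Real.norm_of_nonneg htpos.le]
      rw [div_le_iff₀ htpos]
      calc ‖Complex.log (1 - z * t)‖ ≤ 3/2 * ‖z * (t:ℂ)‖ := hlog
        _ = 3/2 * ‖z‖ * t := by
            rw [norm_mul, Complex.norm_real, Real.norm_of_nonneg htpos.le]; ring
  have hB : IntervalIntegrable (fun t : ℝ => Complex.log (1 - z * t) / t) volume t₀ 1 := by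
    apply ContinuousOn.intervalIntegrable
    apply li2_integrand_continuousOn hz
    intro t ht
    rw [Set.uIcc_of_le ht₀le1] at ht
    exact lt_of_lt_of_le ht₀pos ht.1
  exact hA.trans hB

lemma hasDerivAt_Li2 {z : ℂ} (hz : z.im ≠ 0) :
    HasDerivAt Li2 (-Complex.log (1 - z) / z) z := by
  have habs : 0 < |z.im| := abs_pos.mpr hz
  set δ : ℝ := |z.im| / 2 with hδdef
  have hδpos : 0 < δ := by positivity
  set M : ℝ := ‖z‖ + δ with hMdef
  have hM0 : 0 ≤ M := by positivity
  have hδM : 0 < δ + M := by positivity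
  have himlb : ∀ x ∈ Metric.ball z δ, δ ≤ |x.im| := by
    intro x hx
    have h1 : |x.im - z.im| ≤ ‖x - z‖ := by
      rw [← Complex.sub_im]; exact Complex.abs_im_le_norm _
    have h2 : ‖x - z‖ < δ := by
      rwa [Metric.mem_ball, Complex.dist_eq] at hx
    have := abs_sub_abs_le_abs_sub z.im x.im
    rw [abs_sub_comm z.im x.im] at this
    have : |z.im| - |x.im| ≤ |x.im - z.im| := this
    have hzim : |z.im| = 2 * δ := by rw [hδdef]; ring
    linarith [le_of_lt (lt_of_le_of_lt h1 h2)]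
  have habslb : ∀ x ∈ Metric.ball z δ, ‖x‖ ≤ M := by
    intro x hx
    have h2 : ‖x - z‖ < δ := by
      rwa [Metric.mem_ball, Complex.dist_eq] at hx
    calc ‖x‖ = ‖x - z + z‖ := by ring_nf
      _ ≤ ‖x - z‖ + ‖z‖ := norm_add_le _ _
      _ ≤ M := by rw [hMdef]; linarith
  have hlb : ∀ t ∈ Set.Ioc (0:ℝ) 1, ∀ x ∈ Metric.ball z δ,
      δ / (δ + M) ≤ ‖1 - x * t‖ := by
    intro t ht x hx
    rcases le_or_gt t (1/(δ+M)) with hcase | hcase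
    · have h1 : ‖x * t‖ ≤ M * t := by
        rw [norm_mul, Complex.norm_real, Real.norm_eq_abs, _root_.abs_of_nonneg ht.1.le]
        exact mul_le_mul_of_nonneg_right (habslb x hx) ht.1.le
      have h2 : (1:ℝ) - ‖x * t‖ ≤ ‖1 - x * t‖ := by
        have h5 := abs_norm_sub_norm_le (1:ℂ) (x * (t:ℂ))
        simp only [norm_one] at h5
        linarith [le_abs_self ((1:ℝ) - ‖x * (t:ℂ)‖)]
      have h3 : M * t ≤ M * (1 / (δ + M)) :=
        mul_le_mul_of_nonneg_left hcase hM0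
      have h4 : δ / (δ + M) = 1 - M * (1 / (δ + M)) := by field_simp; ring
      calc δ / (δ + M) = 1 - M * (1 / (δ + M)) := h4
        _ ≤ 1 - M * t := by linarith
        _ ≤ 1 - ‖x * (t:ℂ)‖ := by linarith
        _ ≤ ‖1 - x * (t:ℂ)‖ := h2
    · have h1 : |(1 - x * t).im| ≤ ‖1 - x * t‖ := Complex.abs_im_le_norm _
      have h2 : (1 - x * (t:ℂ)).im = -(x.im * t) := by simp
      rw [h2, abs_neg, abs_mul, _root_.abs_of_nonneg ht.1.le] at h1
      calc δ / (δ + M) = δ * (1/(δ+M)) := by ring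
        _ ≤ |x.im| * t := by
            apply mul_le_mul (himlb x hx) hcase.le (by positivity) (abs_nonneg _)
        _ ≤ ‖1 - x * t‖ := h1
  have key := intervalIntegral.hasDerivAt_integral_of_dominated_loc_of_deriv_le
    (F := fun x (t : ℝ) => Complex.log (1 - x * t) / t)
    (F' := fun x (t : ℝ) => -(1 - x * t)⁻¹)
    (x₀ := z) (s := Metric.ball z δ) (a := 0) (b := 1) (μ := volume)
    (bound := fun _ => (δ + M)/δ) (Metric.ball_mem_nhds z hδpos)
    (Filter.Eventually.of_forall fun x => li2_integrand_measurable x)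
    (li2_integrand_intervalIntegrable hz)
    (by
      apply Measurable.aestronglyMeasurable
      exact ((measurable_const.sub (Complex.measurable_ofReal.const_mul z)).inv).neg)
    (by
      apply Filter.Eventually.of_forall
      intro t ht x hx
      rw [Set.uIoc_of_le (zero_le_one)] at ht
      have hlow := hlb t ht x hx
      have hpos : (0:ℝ) < δ / (δ + M) := by positivity
      simp only [norm_neg, norm_inv]
      have h6 : (‖1 - x * (t:ℂ)‖)⁻¹ ≤ (δ / (δ + M))⁻¹ := by
        gcongr
      rw [inv_div] at h6
      exact h6)
    (_root_.intervalIntegrable_const)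
    (by
      apply Filter.Eventually.of_forall
      intro t ht x hx
      rw [Set.uIoc_of_le (zero_le_one)] at ht
      have htpos : 0 < t := ht.1
      have hxim : x.im ≠ 0 := by
        have := himlb x hx
        intro hc; rw [hc] at this; simp at this; linarith
      have hmem := one_sub_mul_mem_slitPlane hxim htpos.le
      have hinner : HasDerivAt (fun y : ℂ => 1 - y * (t:ℂ)) (-(t:ℂ)) x := by
        simpa using ((hasDerivAt_id x).mul_const ((t:ℂ))).const_sub 1
      have hcomp := ((Complex.hasDerivAt_log hmem).comp x hinner).div_const ((t:ℂ))
      refine hcomp.congr_deriv ?_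
      have htne : (t:ℂ) ≠ 0 := Complex.ofReal_ne_zero.mpr (ne_of_gt htpos)
      have hne : 1 - x * (t:ℂ) ≠ 0 := Complex.slitPlane_ne_zero hmem
      rw [mul_neg, neg_div, mul_div_assoc, div_self htne, mul_one])
  have hD := key.2.neg
  have : HasDerivAt Li2 (-∫ t in (0:ℝ)..1, -(1 - z * (t:ℝ))⁻¹) z := hD
  rw [intervalIntegral.integral_neg, neg_neg, integral_inv_one_sub_mul hz] at this
  exact this
lemma im_one_sub_inv_pos {z : ℂ} (hz : 0 < z.im) : 0 < (1 - 1/z).im := by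
  have hz0 : z ≠ 0 := fun h => by simp [h] at hz
  have h1 : (1 - 1/z).im = z.im / Complex.normSq z := by
    rw [Complex.sub_im, Complex.one_im, one_div, Complex.inv_im]
    ring
  rw [h1]
  have : 0 < Complex.normSq z := Complex.normSq_pos.mpr hz0
  positivity

lemma arg_ne_pi_of_im_pos {z : ℂ} (hz : 0 < z.im) : z.arg ≠ Real.pi := by
  intro h
  rw [Complex.arg_eq_pi_iff] at h
  linarith [h.2]

lemma mem_slitPlane_of_im_ne {z : ℂ} (hz : z.im ≠ 0) : z ∈ Complex.slitPlane :=
  Complex.mem_slitPlane_iff.2 (Or.inr hz)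

lemma li2_fun_eq {z : ℂ} (hz : 0 < z.im) :
    Li2 z = Li2 (1 - 1/z) + (Real.pi:ℂ)^2/6 - Complex.log z * Complex.log (1 - z)
      + (Complex.log z)^2/2 := by
  set g : ℂ → ℂ := fun w => Li2 w - Li2 (1 - 1/w)
    + Complex.log w * Complex.log (1 - w) - (Complex.log w)^2/2 with hgdef
  set S : Set ℂ := {w : ℂ | 0 < w.im} with hSdef
  have hSopen : IsOpen S := isOpen_lt continuous_const Complex.continuous_im
  have hSconv : Convex ℝ S := convex_halfSpace_im_gt 0
  have hderiv : ∀ w ∈ S, HasDerivAt g 0 w := by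
    intro w hw
    have hwim : 0 < w.im := hw
    have hw0 : w ≠ 0 := fun h => by simp [h] at hwim
    have hw1 : (1:ℂ) - w ≠ 0 := by
      intro h
      have h' : w = 1 := by linear_combination -h
      rw [h'] at hwim; simp at hwim
    have hw'im : 0 < (1 - 1/w).im := im_one_sub_inv_pos hwim
    have hw'0 : (1 - 1/w) ≠ 0 := fun h => by rw [h] at hw'im; simp at hw'im
    have h1 : HasDerivAt Li2 (-Complex.log (1 - w) / w) w := hasDerivAt_Li2 (ne_of_gt hwim)
    have hinv : HasDerivAt (fun u : ℂ => 1 - 1/u) ((w^2)⁻¹) w := by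
      have h := (hasDerivAt_inv hw0).const_sub 1
      simpa [one_div] using h
    have h2 : HasDerivAt (fun u : ℂ => Li2 (1 - 1/u))
        (-Complex.log (1 - (1 - 1/w)) / (1 - 1/w) * (w^2)⁻¹) w := by
      have := (hasDerivAt_Li2 (ne_of_gt hw'im)).comp w hinv; exact this
    have h3 : HasDerivAt Complex.log w⁻¹ w :=
      Complex.hasDerivAt_log (mem_slitPlane_of_im_ne (ne_of_gt hwim))
    have h4 : HasDerivAt (fun u : ℂ => Complex.log (1 - u)) (-(1 - w)⁻¹) w := by
      have hmem : 1 - w ∈ Complex.slitPlane := by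
        apply mem_slitPlane_of_im_ne
        simp only [Complex.sub_im, Complex.one_im]
        intro h; apply ne_of_gt hwim; linarith
      have hin : HasDerivAt (fun u : ℂ => 1 - u) (-1) w := by
        simpa using (hasDerivAt_id w).const_sub 1
      have := (Complex.hasDerivAt_log hmem).comp w hin
      refine this.congr_deriv ?_
      ring
    have h5 := h3.mul h4
    have h6 := (h3.pow 2).div_const 2
    have htot := ((h1.sub h2).add h5).sub h6
    refine htot.congr_deriv ?_
    symm
    have hlog : Complex.log (1 - (1 - 1/w)) = -Complex.log w := by
      rw [sub_sub_cancel, one_div, Complex.log_inv w (arg_ne_pi_of_im_pos hwim)]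
    rw [hlog]
    have hw2 : w - 1 ≠ 0 := fun h => hw1 (by linear_combination -h)
    have hrw : (1:ℂ) - 1/w = (w-1)/w := by field_simp
    rw [hrw]
    have hP : (-w ^ 4 + (w ^ 5 * 2 - w ^ 6)) ≠ 0 := by
      have hfac : (-w ^ 4 + (w ^ 5 * 2 - w ^ 6)) = -(w^4 * (1-w)^2) := by ring
      rw [hfac, neg_ne_zero]
      exact mul_ne_zero (pow_ne_zero _ hw0) (pow_ne_zero _ hw1)
    field_simp
    have hsimp : (-w ^ 4 + (w ^ 5 * 2 - w ^ 6))⁻¹ * (-w ^ 4 + (w ^ 5 * 2 - w ^ 6)) = 1 :=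
      inv_mul_cancel₀ hP
    ring
  have hdiff : DifferentiableOn ℂ g S := fun w hw =>
    ((hderiv w hw).differentiableAt).differentiableWithinAt
  have hfd : ∀ w ∈ S, fderivWithin ℂ g S w = 0 := by
    intro w hw
    have hzero : (ContinuousLinearMap.toSpanSingleton ℂ (0:ℂ)) = 0 := by
      ext v; simp
    have h2 : HasFDerivAt g 0 w := hzero ▸ (hderiv w hw).hasFDerivAt
    rw [fderivWithin_of_isOpen hSopen hw, h2.fderiv]
  -- the fixed point
  set x : ℝ := Real.pi/3 with hxdef
  have hx1 : -Real.pi < x := by rw [hxdef]; linarith [Real.pi_pos]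
  have hx2 : x ≤ Real.pi := by rw [hxdef]; linarith [Real.pi_pos]
  have hx0 : 0 < x := by rw [hxdef]; positivity
  set z₀ : ℂ := Complex.exp ((x:ℂ) * Complex.I) with hz₀def
  have hcos : Complex.cos ((x:ℂ)) = 1/2 := by
    rw [← Complex.ofReal_cos, hxdef, Real.cos_pi_div_three]
    norm_num
  have hz₀im : z₀.im = Real.sin x := by
    rw [hz₀def, Complex.exp_mul_I]
    simp [← Complex.ofReal_sin]
  have hz₀mem : z₀ ∈ S := by
    rw [hSdef, Set.mem_setOf_eq, hz₀im]
    apply Real.sin_pos_of_pos_of_lt_pi hx0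
    rw [hxdef]; linarith [Real.pi_pos]
  have hfix : 1 - 1/z₀ = z₀ := by
    rw [hz₀def, one_div, ← Complex.exp_neg, ← neg_mul, Complex.exp_mul_I, Complex.exp_mul_I,
      Complex.cos_neg, Complex.sin_neg]
    linear_combination (-2:ℂ) * hcos
  have h1z₀ : (1:ℂ) - z₀ = Complex.exp (((-x : ℝ):ℂ) * Complex.I) := by
    rw [hz₀def, Complex.ofReal_neg, Complex.exp_mul_I, Complex.exp_mul_I,
      Complex.cos_neg, Complex.sin_neg]
    linear_combination (-2:ℂ) * hcos
  have him : ∀ y : ℝ, ((y:ℂ) * Complex.I).im = y := by intro y; simp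
  have hlogz₀ : Complex.log z₀ = (x:ℂ) * Complex.I := by
    rw [hz₀def, Complex.log_exp (by rw [him]; linarith) (by rw [him]; linarith)]
  have hlog1z₀ : Complex.log (1 - z₀) = ((-x : ℝ):ℂ) * Complex.I := by
    rw [h1z₀, Complex.log_exp (by rw [him]; linarith) (by rw [him]; linarith)]
  have hgz₀ : g z₀ = (Real.pi:ℂ)^2/6 := by
    rw [hgdef]
    simp only
    rw [hfix, hlogz₀, hlog1z₀, hxdef]
    push_cast
    linear_combination (-(Real.pi:ℂ)^2/6) * Complex.I_sq
  have hconst := hSconv.is_const_of_fderivWithin_eq_zero hdiff hfd hz hz₀mem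
  have hgz : g z = (Real.pi:ℂ)^2/6 := hconst.trans hgz₀
  rw [hgdef] at hgz
  simp only at hgz
  linear_combination hgz
lemma blochWigner_eq_upper {z : ℂ} (hz : 0 < z.im) :
    BlochWigner z = BlochWigner (1 - 1/z) := by
  have hz0 : z ≠ 0 := fun h => by simp [h] at hz
  have hz1' : z ≠ 1 := fun h => by rw [h] at hz; simp at hz
  have habsz : ‖z‖ ≠ 0 := by simpa using hz0
  have h1mz : (1:ℂ) - z ≠ 0 := by
    intro h; exact hz1' (by linear_combination -h)
  have habs1z : ‖1 - z‖ ≠ 0 := norm_ne_zero_iff.mpr h1mz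
  have hfe := li2_fun_eq hz
  have him := congrArg Complex.im hfe
  have hC : ((Real.pi:ℂ)^2/6).im = 0 := by
    have : ((Real.pi:ℂ)^2/6) = ((Real.pi^2/6 : ℝ) : ℂ) := by push_cast; ring
    rw [this, Complex.ofReal_im]
  have hmul : (Complex.log z * Complex.log (1-z)).im
      = Real.log (‖z‖) * (1-z).arg + z.arg * Real.log (‖1-z‖) := by
    rw [Complex.mul_im, Complex.log_re, Complex.log_im, Complex.log_re, Complex.log_im]
  have hsq : ((Complex.log z)^2/2).im = Real.log (‖z‖) * z.arg := by
    rw [show (2:ℂ) = ((2:ℝ):ℂ) by norm_num, Complex.div_ofReal_im, sq, Complex.mul_im,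
      Complex.log_re, Complex.log_im]
    ring
  rw [Complex.add_im, Complex.sub_im, Complex.add_im, hC, hmul, hsq] at him
  -- facts about w = 1 - 1/z
  have h1w : (1:ℂ) - (1 - 1/z) = z⁻¹ := by rw [sub_sub_cancel, one_div]
  have hargw : ((1:ℂ) - (1 - 1/z)).arg = -z.arg := by
    rw [h1w, Complex.arg_inv, if_neg (arg_ne_pi_of_im_pos hz)]
  have hweq : (1:ℂ) - 1/z = (z - 1)/z := by field_simp
  have habsw : Real.log (‖1 - 1/z‖)
      = Real.log (‖1-z‖) - Real.log (‖z‖) := by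
    rw [hweq, norm_div, norm_sub_rev z 1]
    exact Real.log_div habs1z habsz
  simp only [BlochWigner]
  rw [him, hargw, habsw]
  ring
lemma arg_ne_pi_of_im_ne {z : ℂ} (hz : z.im ≠ 0) : z.arg ≠ Real.pi := by
  intro h
  rw [Complex.arg_eq_pi_iff] at h
  exact hz h.2

lemma im_one_sub_mul_ne {z : ℂ} (hz : z.im ≠ 0) {t : ℝ} (ht : 0 < t) :
    (1 - z * t).im ≠ 0 := by
  have : (1 - z * (t:ℂ)).im = -(z.im * t) := by simp
  rw [this]
  intro h
  exact hz (by nlinarith [neg_eq_zero.mp h])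

lemma li2_conj {z : ℂ} (hz : z.im ≠ 0) :
    Li2 ((starRingEnd ℂ) z) = (starRingEnd ℂ) (Li2 z) := by
  rw [Li2, Li2, map_neg]
  congr 1
  rw [intervalIntegral.integral_of_le (zero_le_one), intervalIntegral.integral_of_le (zero_le_one),
    ← integral_conj]
  apply setIntegral_congr_ae measurableSet_Ioc
  apply Filter.Eventually.of_forall
  intro t ht
  have harg : (1 - z * (t:ℂ)).arg ≠ Real.pi :=
    arg_ne_pi_of_im_ne (im_one_sub_mul_ne hz ht.1)
  have h1 : 1 - (starRingEnd ℂ) z * (t:ℂ) = (starRingEnd ℂ) (1 - z * (t:ℂ)) := by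
    rw [map_sub, map_one, map_mul, Complex.conj_ofReal]
  rw [h1, Complex.log_conj _ harg, map_div₀, Complex.conj_ofReal]

lemma blochWigner_conj {z : ℂ} (hz : z.im ≠ 0) :
    BlochWigner ((starRingEnd ℂ) z) = -BlochWigner z := by
  have harg : (1 - z).arg ≠ Real.pi := by
    apply arg_ne_pi_of_im_ne
    simp only [Complex.sub_im, Complex.one_im]
    intro h; exact hz (by linarith)
  have h1 : (1 : ℂ) - (starRingEnd ℂ) z = (starRingEnd ℂ) (1 - z) := by
    rw [map_sub, map_one]
  simp only [BlochWigner, li2_conj hz, Complex.conj_im, h1, Complex.arg_conj,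
    if_neg harg, Complex.norm_conj]
  ring
lemma blochWigner_real_lt_one {x : ℝ} (hx : x < 1) : BlochWigner (x:ℂ) = 0 := by
  have him : (Li2 (x:ℂ)).im = 0 := by
    rw [Li2, Complex.neg_im]
    have heq : (∫ t in (0:ℝ)..1, Complex.log (1 - (x:ℂ) * t) / t)
        = ((∫ t in (0:ℝ)..1, Real.log (1 - x*t) / t : ℝ) : ℂ) := by
      rw [← intervalIntegral.integral_ofReal]
      apply intervalIntegral.integral_congr_ae
      apply Filter.Eventually.of_forall
      intro t ht
      rw [Set.uIoc_of_le zero_le_one] at ht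
      have h1 : (0:ℝ) < 1 - x * t := by nlinarith [ht.1, ht.2]
      have h2 : ((1:ℂ) - ↑x*↑t) = ((1 - x*t : ℝ) : ℂ) := by push_cast; ring
      rw [h2, ← Complex.ofReal_log h1.le, ← Complex.ofReal_div]
    rw [heq, Complex.ofReal_im, neg_zero]
  have harg : ((1:ℂ) - x).arg = 0 := by
    rw [show (1:ℂ) - x = ((1 - x : ℝ):ℂ) by push_cast; ring]
    exact Complex.arg_ofReal_of_nonneg (by linarith)
  rw [BlochWigner, him, harg]
  ring

lemma log_ofReal_neg {r : ℝ} (hr : r < 0) :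
    Complex.log (r:ℂ) = ((Real.log (-r) : ℝ):ℂ) + (Real.pi:ℂ) * Complex.I := by
  apply Complex.ext
  · rw [Complex.add_re, Complex.ofReal_re, Complex.log_re, Complex.norm_real,
      Real.norm_eq_abs, abs_of_neg hr, ← Real.log_neg_eq_log]
    simp
  · rw [Complex.add_im, Complex.log_im, Complex.arg_ofReal_of_neg hr]
    simp

lemma blochWigner_real_gt_one {x : ℝ} (hx : 1 < x) : BlochWigner (x:ℂ) = 0 := by
  have hx0 : (0:ℝ) < x := by linarith
  set c : ℝ := 1/x with hcdef
  have hc0 : 0 < c := by positivity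
  have hc1 : c < 1 := by rw [hcdef]; rw [div_lt_one hx0]; linarith
  have hxc : x * c = 1 := by rw [hcdef]; field_simp
  -- piece 1
  have heq1 : (∫ t in (0:ℝ)..c, Complex.log (1 - (x:ℂ) * t) / t)
      = ((∫ t in (0:ℝ)..c, Real.log (1 - x*t) / t : ℝ) : ℂ) := by
    rw [← intervalIntegral.integral_ofReal]
    apply intervalIntegral.integral_congr_ae
    have hae : ∀ᵐ t : ℝ ∂volume, t ≠ c := by
      simp only [ae_iff, not_not, Set.setOf_eq_eq_singleton]
      exact measure_singleton c
    filter_upwards [hae] with t htne ht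
    rw [Set.uIoc_of_le hc0.le] at ht
    have htc : t < c := lt_of_le_of_ne ht.2 htne
    have h1 : (0:ℝ) < 1 - x * t := by nlinarith [ht.1]
    have h2 : ((1:ℂ) - ↑x*↑t) = ((1 - x*t : ℝ) : ℂ) := by push_cast; ring
    rw [h2, ← Complex.ofReal_log h1.le, ← Complex.ofReal_div]
  -- piece 2 decomposition
  have hg_int_real : IntervalIntegrable (fun t : ℝ => Real.log (1 - x*t) / t) volume c 1 := by
    have h1 := intervalIntegrable_log_one_sub_mul x (ne_of_gt hx0) c 1
    have h2 : ContinuousOn (fun t : ℝ => t⁻¹) (Set.uIcc c 1) := by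
      apply ContinuousOn.inv₀ continuousOn_id
      intro t ht
      rw [Set.uIcc_of_le hc1.le] at ht
      exact ne_of_gt (lt_of_lt_of_le hc0 ht.1)
    simpa [div_eq_mul_inv] using h1.mul_continuousOn h2
  have hg_int : IntervalIntegrable (fun t : ℝ => ((Real.log (1 - x*t) / t : ℝ) : ℂ)) volume c 1 :=
    ⟨hg_int_real.1.ofReal, hg_int_real.2.ofReal⟩
  have hh_int : IntervalIntegrable (fun t : ℝ => ((Real.pi / t : ℝ) : ℂ) * Complex.I) volume c 1 := by
    apply ContinuousOn.intervalIntegrable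
    apply ContinuousOn.mul _ continuousOn_const
    apply Complex.continuous_ofReal.comp_continuousOn
    apply ContinuousOn.div continuousOn_const continuousOn_id
    intro t ht
    rw [Set.uIcc_of_le hc1.le] at ht
    exact ne_of_gt (lt_of_lt_of_le hc0 ht.1)
  have heq2 : (∫ t in c..(1:ℝ), Complex.log (1 - (x:ℂ) * t) / t)
      = ((∫ t in c..(1:ℝ), Real.log (1 - x*t) / t : ℝ) : ℂ)
        + ((Real.pi * Real.log x : ℝ) : ℂ) * Complex.I := by
    have hsplit : (∫ t in c..(1:ℝ), Complex.log (1 - (x:ℂ) * t) / t)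
        = (∫ t in c..(1:ℝ), (((Real.log (1 - x*t) / t : ℝ) : ℂ)
            + ((Real.pi / t : ℝ) : ℂ) * Complex.I)) := by
      apply intervalIntegral.integral_congr_ae
      apply Filter.Eventually.of_forall
      intro t ht
      rw [Set.uIoc_of_le hc1.le] at ht
      have htpos : 0 < t := lt_trans hc0 ht.1
      have h1 : 1 - x * t < 0 := by nlinarith [ht.1]
      have h2 : ((1:ℂ) - ↑x*↑t) = ((1 - x*t : ℝ) : ℂ) := by push_cast; ring
      rw [h2, log_ofReal_neg h1]
      have htne : (t:ℂ) ≠ 0 := Complex.ofReal_ne_zero.mpr (ne_of_gt htpos)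
      rw [← Real.log_neg_eq_log, neg_sub]  -- log (-(1-xt)) = log (x t - 1)? careful
      push_cast
      field_simp
      rw [neg_sub]
    rw [hsplit, intervalIntegral.integral_add hg_int hh_int]
    congr 1
    · rw [intervalIntegral.integral_ofReal]
    · rw [intervalIntegral.integral_mul_const]
      congr 1
      have : (fun t : ℝ => ((Real.pi / t : ℝ) : ℂ)) = fun t : ℝ => ((Real.pi * (1/t) : ℝ) : ℂ) := by
        funext t; rw [mul_one_div]
      rw [this]
      have hpull : (∫ t in c..(1:ℝ), ((Real.pi * (1/t) : ℝ) : ℂ))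
          = ((∫ t in c..(1:ℝ), Real.pi * (1/t) : ℝ) : ℂ) := intervalIntegral.integral_ofReal
      rw [hpull, intervalIntegral.integral_const_mul, integral_one_div_of_pos hc0 one_pos,
        hcdef]
      norm_num
  -- combine
  have hI1_real : IntervalIntegrable (fun t : ℝ => Real.log (1 - x*t) / t) volume 0 c := by
    have hpart1 : IntervalIntegrable (fun t : ℝ => Real.log (1 - x*t) / t) volume 0 (c/2) := by
      rw [intervalIntegrable_iff, Set.uIoc_of_le (by linarith : (0:ℝ) ≤ c/2)]
      apply Measure.integrableOn_of_bounded (M := 3/2 * x) measure_Ioc_lt_top.ne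
      · apply Measurable.aestronglyMeasurable
        exact (Real.measurable_log.comp
          (measurable_const.sub (measurable_id.const_mul x))).div measurable_id
      · apply (ae_restrict_iff' measurableSet_Ioc).mpr
        apply Filter.Eventually.of_forall
        intro t ht
        have htpos : 0 < t := ht.1
        have hxt : x * t ≤ 1/2 := by
          have : x * t ≤ x * (c/2) := by
            apply mul_le_mul_of_nonneg_left ht.2 hx0.le
          have h2 : x * (c/2) = 1/2 := by rw [hcdef]; field_simp
          linarith
        have h1 : (0:ℝ) < 1 - x * t := by nlinarith
        have hxtnn : (0:ℝ) ≤ x * t := mul_nonneg hx0.le htpos.le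
        have hb : ‖Complex.log (1 - ((x*t : ℝ):ℂ))‖ ≤ 3/2 * ‖((x*t:ℝ):ℂ)‖ := by
          apply norm_log_one_sub_le_self
          rw [Complex.norm_real, Real.norm_of_nonneg hxtnn]
          linarith
        have hcast : (1:ℂ) - ((x*t : ℝ):ℂ) = ((1 - x*t : ℝ):ℂ) := by push_cast; ring
        rw [hcast, ← Complex.ofReal_log h1.le, Complex.norm_real, Complex.norm_real,
          Real.norm_eq_abs, Real.norm_eq_abs, _root_.abs_of_nonneg hxtnn] at hb
        rw [Real.norm_eq_abs, abs_div, abs_of_pos htpos, div_le_iff₀ htpos]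
        calc |Real.log (1 - x*t)| ≤ 3/2 * (x*t) := hb
          _ = 3/2 * x * t := by ring
    have hpart2 : IntervalIntegrable (fun t : ℝ => Real.log (1 - x*t) / t) volume (c/2) c := by
      have h1 := intervalIntegrable_log_one_sub_mul x (ne_of_gt hx0) (c/2) c
      have h2 : ContinuousOn (fun t : ℝ => t⁻¹) (Set.uIcc (c/2) c) := by
        apply ContinuousOn.inv₀ continuousOn_id
        intro t ht
        rw [Set.uIcc_of_le (by linarith : c/2 ≤ c)] at ht
        exact ne_of_gt (lt_of_lt_of_le (by linarith : (0:ℝ) < c/2) ht.1)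
      simpa [div_eq_mul_inv] using h1.mul_continuousOn h2
    exact hpart1.trans hpart2
  have hI1 : IntervalIntegrable (fun t : ℝ => Complex.log (1 - (x:ℂ) * t) / t) volume 0 c := by
    rw [intervalIntegrable_iff, Set.uIoc_of_le hc0.le]
    have hbase : IntegrableOn (fun t : ℝ => ((Real.log (1 - x*t) / t : ℝ):ℂ))
        (Set.Ioc 0 c) volume := by
      rw [intervalIntegrable_iff, Set.uIoc_of_le hc0.le] at hI1_real
      exact hI1_real.ofReal
    apply hbase.congr
    apply (ae_restrict_iff' measurableSet_Ioc).mpr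
    have hae : ∀ᵐ t : ℝ ∂volume, t ≠ c := by
      simp only [ae_iff, not_not, Set.setOf_eq_eq_singleton]
      exact measure_singleton c
    filter_upwards [hae] with t htne ht
    have htc : t < c := lt_of_le_of_ne ht.2 htne
    have h1 : (0:ℝ) < 1 - x * t := by nlinarith [ht.1]
    have h2 : ((1:ℂ) - ↑x*↑t) = ((1 - x*t : ℝ) : ℂ) := by push_cast; ring
    rw [h2, ← Complex.ofReal_log h1.le, ← Complex.ofReal_div]
  have hI2 : IntervalIntegrable (fun t : ℝ => Complex.log (1 - (x:ℂ) * t) / t) volume c 1 := by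
    rw [intervalIntegrable_iff, Set.uIoc_of_le hc1.le]
    have hbase := (hg_int.add hh_int)
    rw [intervalIntegrable_iff, Set.uIoc_of_le hc1.le] at hbase
    apply hbase.congr
    apply (ae_restrict_iff' measurableSet_Ioc).mpr
    apply Filter.Eventually.of_forall
    intro t ht
    have htpos : 0 < t := lt_trans hc0 ht.1
    have h1 : 1 - x * t < 0 := by nlinarith [ht.1]
    have h2 : ((1:ℂ) - ↑x*↑t) = ((1 - x*t : ℝ) : ℂ) := by push_cast; ring
    have htne : (t:ℂ) ≠ 0 := Complex.ofReal_ne_zero.mpr (ne_of_gt htpos)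
    symm
    beta_reduce
    rw [h2, log_ofReal_neg h1, ← Real.log_neg_eq_log, neg_sub]
    push_cast
    field_simp
    rw [neg_sub]
  have hsum := intervalIntegral.integral_add_adjacent_intervals hI1 hI2
  have him : (Li2 (x:ℂ)).im = -(Real.pi * Real.log x) := by
    rw [Li2, Complex.neg_im, ← hsum, Complex.add_im, heq1, heq2, Complex.ofReal_im,
      Complex.add_im, Complex.ofReal_im]
    simp
  have harg : ((1:ℂ) - x).arg = Real.pi := by
    rw [show (1:ℂ) - x = ((1 - x : ℝ):ℂ) by push_cast; ring]
    exact Complex.arg_ofReal_of_neg (by linarith)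
  rw [BlochWigner, him, harg, Complex.norm_real, Real.norm_eq_abs, abs_of_pos hx0]
  ring
lemma im_one_sub_inv (z : ℂ) : (1 - 1/z).im = z.im / Complex.normSq z := by
  rw [Complex.sub_im, Complex.one_im, one_div, Complex.inv_im]; ring

/-- For `z ∈ ℂ \ {0,1}`, the Bloch–Wigner function satisfies `D(z) = D(1 - 1/z)`. -/
theorem blochWigner_eq_of_inv_transform (z : ℂ) (h0 : z ≠ 0) (h1 : z ≠ 1) :
    BlochWigner z = BlochWigner (1 - 1 / z) := by
  rcases lt_trichotomy z.im 0 with hneg | hzero | hpos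
  · have hcim : 0 < ((starRingEnd ℂ) z).im := by
      rw [Complex.conj_im]; linarith
    have h2 := blochWigner_eq_upper hcim
    have h3 : (1:ℂ) - 1/((starRingEnd ℂ) z) = (starRingEnd ℂ) (1 - 1/z) := by
      rw [map_sub, map_one, map_div₀, map_one]
    rw [h3] at h2
    have h4 := blochWigner_conj (z := z) (ne_of_lt hneg)
    have hwim : (1 - 1/z).im ≠ 0 := by
      rw [im_one_sub_inv]
      exact div_ne_zero (ne_of_lt hneg) (ne_of_gt (Complex.normSq_pos.mpr h0))
    have h5 := blochWigner_conj (z := 1 - 1/z) hwim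
    rw [h4, h5] at h2
    linarith
  · -- real case
    set x : ℝ := z.re with hxdef
    have hzx : z = ((x : ℝ) : ℂ) := by
      apply Complex.ext
      · simp [hxdef]
      · simp [hzero]
    have hx0 : x ≠ 0 := fun h => h0 (by rw [hzx, h]; simp)
    have hx1 : x ≠ 1 := fun h => h1 (by rw [hzx, h]; simp)
    have hw : (1:ℂ) - 1/z = ((1 - 1/x : ℝ) : ℂ) := by
      rw [hzx]; push_cast; ring
    have hDz : BlochWigner z = 0 := by
      rcases lt_or_gt_of_ne hx1 with h | h
      · rw [hzx]; exact blochWigner_real_lt_one h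
      · rw [hzx]; exact blochWigner_real_gt_one h
    have hDw : BlochWigner (1 - 1/z) = 0 := by
      rw [hw]
      have hy1 : 1 - 1/x ≠ 1 := by
        intro h
        have : (1:ℝ)/x = 0 := by linarith
        exact one_div_ne_zero hx0 this
      rcases lt_or_gt_of_ne hy1 with h | h
      · exact blochWigner_real_lt_one h
      · exact blochWigner_real_gt_one h
    rw [hDz, hDw]
  · exact blochWigner_eq_upper hpos
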